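/- arXiv:1610.08621 — 3 statements merged into one kernel-verified Lean document; each statement's English description precedes it below -/
import Mathlib

section
/- In the block Lasso setting with α ∈ (1,∞), let Ê be the equicorrelation group set, γ̂_j = ‖β̂_{(j)}‖_α, Z the n×|Ê| matrix with columns Z_j = X_{(j)}η(S_{(j)}), and ŷ = Xβ̂ the (unique) fitted value. If the null space of Z is {0}, then the block Lasso solution is unique and is given by β̂_{(j)} = 0 for j ∉ Ê and β̂_{(j)} = γ̂_j η(S_{(j)}) for j ∈ Ê with γ̂_Ê = (Z^T Z)^{-1} Z^T ŷ; moreover the number of nonzero groups of β̂ is at most min(n, J). -/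
open Real


lemma hp1 (α x : ℝ) (hα : 1 < α) : |x| ^ (α-2) * |x| = |x| ^ (α-1) := by
  rcases eq_or_ne x 0 with h | h
  · simp [h, Real.zero_rpow (by linarith : α - 1 ≠ 0)]
  · have hx : (0:ℝ) < |x| := abs_pos.mpr h
    nth_rewrite 2 [← Real.rpow_one |x|]
    rw [← Real.rpow_add hx]
    congr 1; ring

lemma hp2 (α Q x : ℝ) (hα : 1 < α) (hQ : 0 < Q) :
    |Q ^ (1/α - 1) * (|x| ^ (α-2) * x)| = Q ^ (1/α - 1) * |x| ^ (α-1) := by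
  rw [abs_mul, abs_mul, abs_of_pos (Real.rpow_pos_of_pos hQ _),
    abs_of_nonneg (Real.rpow_nonneg (abs_nonneg x) _), hp1 α x hα]

-- inverse map identity: recovering x from its score
lemma hp3 (α ρ Q x : ℝ) (hα : 1 < α) (h1 : (α-1)*ρ = 1) (h2 : (1/α-1)*ρ = -(1/α))
    (hQ : 0 < Q) :
    Q ^ (1/α) * (Real.sign (Q ^ (1/α - 1) * (|x| ^ (α-2) * x)) *
      |Q ^ (1/α - 1) * (|x| ^ (α-2) * x)| ^ ρ) = x := by
  have hQ1 : (0:ℝ) < Q ^ (1/α - 1) := Real.rpow_pos_of_pos hQ _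
  rcases lt_trichotomy x 0 with hx | hx | hx
  · have hax : (0:ℝ) < |x| := abs_pos.mpr hx.ne
    have hs : Q ^ (1/α - 1) * (|x| ^ (α-2) * x) = -(Q ^ (1/α-1) * |x| ^ (α-1)) := by
      have : |x| ^ (α-2) * x = -(|x| ^ (α-2) * |x|) := by
        rw [abs_of_neg hx]; ring
      rw [this, hp1 α x hα]; ring
    have hpos : (0:ℝ) < Q ^ (1/α-1) * |x| ^ (α-1) :=
      mul_pos hQ1 (Real.rpow_pos_of_pos hax _)
    rw [hs, Real.sign_of_neg (by linarith), abs_neg, abs_of_pos hpos,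
      Real.mul_rpow hQ1.le (Real.rpow_nonneg (abs_nonneg x) _),
      ← Real.rpow_mul hQ.le, ← Real.rpow_mul (abs_nonneg x), h1, h2, Real.rpow_one,
      abs_of_neg hx]
    rw [show Q ^ (1/α) * (-1 * (Q ^ (-(1/α)) * -x)) = (Q ^ (1/α) * Q ^ (-(1/α))) * x by ring,
      ← Real.rpow_add hQ, add_neg_cancel, Real.rpow_zero, one_mul]
  · simp [hx]
  · have hax : (0:ℝ) < |x| := abs_pos.mpr hx.ne'
    have hs : Q ^ (1/α - 1) * (|x| ^ (α-2) * x) = Q ^ (1/α-1) * |x| ^ (α-1) := by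
      have : |x| ^ (α-2) * x = |x| ^ (α-2) * |x| := by rw [abs_of_pos hx]
      rw [this, hp1 α x hα]
    have hpos : (0:ℝ) < Q ^ (1/α-1) * |x| ^ (α-1) :=
      mul_pos hQ1 (Real.rpow_pos_of_pos hax _)
    rw [hs, Real.sign_of_pos hpos, abs_of_pos hpos,
      Real.mul_rpow hQ1.le (Real.rpow_nonneg (abs_nonneg x) _),
      ← Real.rpow_mul hQ.le, ← Real.rpow_mul (abs_nonneg x), h1, h2, Real.rpow_one,
      abs_of_pos hx]
    rw [show Q ^ (1/α) * (1 * (Q ^ (-(1/α)) * x)) = (Q ^ (1/α) * Q ^ (-(1/α))) * x by ring,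
      ← Real.rpow_add hQ, add_neg_cancel, Real.rpow_zero, one_mul]

lemma stationary {n p J : ℕ} (y : Fin n → ℝ) (X : Matrix (Fin n) (Fin p) ℝ)
    (lam : ℝ) (w : Fin J → ℝ) (G : Fin J → Finset (Fin p))
    (hdisj : ∀ j k, j ≠ k → Disjoint (G j) (G k))
    (α : ℝ) (hα : 1 < α)
    (L : (Fin p → ℝ) → ℝ)
    (hL : ∀ β, L β = (1 / (2 * n)) * ∑ k, (y k - X.mulVec β k) ^ 2 +
        lam * ∑ j, w j * (∑ i ∈ G j, |β i| ^ α) ^ (1 / α))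
    (c : Fin p → ℝ) (hc : ∀ β, L c ≤ L β)
    (j : Fin J) (i0 : Fin p) (hi0 : i0 ∈ G j)
    (hQ : 0 < ∑ i ∈ G j, |c i| ^ α) :
    (↑n)⁻¹ * (∑ k, X k i0 * (y k - X.mulVec c k)) =
      lam * w j * ((∑ i ∈ G j, |c i| ^ α) ^ (1/α - 1) * (|c i0| ^ (α-2) * c i0)) := by
  classical
  set v := X.mulVec c with hv
  set Q := ∑ i ∈ G j, |c i| ^ α with hQdef
  set C := ∑ i ∈ G j \ {i0}, |c i| ^ α with hC
  have hQC : Q = C + |c i0| ^ α := Finset.sum_eq_sum_sdiff_singleton_add hi0 _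
  have hmem : ∀ j', i0 ∈ G j' → j' = j := by
    intro j' h
    by_contra hne
    exact Finset.disjoint_left.mp (hdisj j' j hne) h hi0
  -- the perturbed vector
  have hupdate : ∀ t : ℝ, Function.update c i0 (c i0 + t) =
      fun i => c i + t * (if i = i0 then 1 else 0) := by
    intro t; funext i
    by_cases h : i = i0 <;> simp [h, Function.update_apply]
  have hmv : ∀ t k, X.mulVec (Function.update c i0 (c i0 + t)) k = v k + t * X k i0 := by
    intro t k
    rw [hupdate]
    simp only [Matrix.mulVec, dotProduct, mul_add]
    rw [Finset.sum_add_distrib]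
    congr 1
    simp only [mul_ite, mul_one, mul_zero]
    rw [Finset.sum_ite_eq' Finset.univ i0 (fun i => X k i * t)]
    simp [mul_comm]
  have hpenj : ∀ t : ℝ, ∑ i ∈ G j, |Function.update c i0 (c i0 + t) i| ^ α
      = C + |c i0 + t| ^ α := by
    intro t
    rw [Finset.sum_eq_sum_sdiff_singleton_add hi0]
    congr 1
    · refine Finset.sum_congr rfl fun i hi => ?_
      have hne : i ≠ i0 := by
        have := (Finset.mem_sdiff.mp hi).2
        simpa using this
      rw [Function.update_apply, if_neg hne]
    · rw [Function.update_self]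
  set K : ℝ := ∑ j' ∈ Finset.univ.erase j, w j' * (∑ i ∈ G j', |c i| ^ α) ^ (1/α) with hK
  set F : ℝ → ℝ := fun t => (1/(2*(n:ℝ))) * ∑ k, (y k - v k - t * X k i0)^2 +
      lam * (w j * (C + |c i0 + t| ^ α) ^ (1/α) + K) with hF
  have hLF : ∀ t, L (Function.update c i0 (c i0 + t)) = F t := by
    intro t
    rw [hL, hF]
    congr 1
    · congr 1
      refine Finset.sum_congr rfl fun k _ => ?_
      rw [hmv t k]; ring_nf
    · congr 1
      rw [← Finset.add_sum_erase _ _ (Finset.mem_univ j), hpenj t]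
      congr 1
      refine Finset.sum_congr rfl fun j' hj' => ?_
      have hj'ne : j' ≠ j := (Finset.mem_erase.mp hj').1
      have hno : i0 ∉ G j' := fun h => hj'ne (hmem j' h)
      have hss : ∑ i ∈ G j', |Function.update c i0 (c i0 + t) i| ^ α
          = ∑ i ∈ G j', |c i| ^ α := by
        refine Finset.sum_congr rfl fun i hi => ?_
        have hne2 : i ≠ i0 := fun h => hno (h ▸ hi)
        rw [Function.update_apply, if_neg hne2]
      rw [hss]
  have hA : HasDerivAt (fun t : ℝ => (1/(2*(n:ℝ))) * ∑ k, (y k - v k - t * X k i0)^2)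
      ((1/(2*(n:ℝ))) * ∑ k, 2 * (y k - v k) * (-(X k i0))) 0 := by
    have hsd : HasDerivAt (fun t : ℝ => ∑ k, (y k - v k - t * X k i0)^2)
        (∑ k, 2 * (y k - v k) * (-(X k i0))) 0 := by
      refine HasDerivAt.fun_sum fun k _ => ?_
      have h1 : HasDerivAt (fun t : ℝ => y k - v k - t * X k i0) (-(X k i0)) 0 := by
        simpa using ((hasDerivAt_id (0:ℝ)).mul_const (X k i0)).const_sub (y k - v k)
      have h2 := h1.fun_pow 2
      norm_num at h2
      refine h2.congr_deriv ?_
      ring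
    exact hsd.const_mul _
  have hg : HasDerivAt (fun t : ℝ => (C + |c i0 + t| ^ α) ^ (1/α))
      ((1/α * Q ^ (1/α - 1)) * (α * |c i0| ^ (α - 2) * c i0)) 0 := by
    have habs : HasDerivAt (fun x : ℝ => |x| ^ α) (α * |c i0| ^ (α-2) * c i0) (c i0 + 0) := by
      simpa using hasDerivAt_abs_rpow (c i0) hα
    have hin : HasDerivAt (fun t : ℝ => c i0 + t) 1 0 := by
      simpa using (hasDerivAt_id (0:ℝ)).const_add (c i0)
    have hcomp := habs.comp 0 hin
    have hcomp' : HasDerivAt (fun t : ℝ => C + |c i0 + t| ^ α)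
        (α * |c i0| ^ (α-2) * c i0) 0 := by
      have := hcomp.const_add C
      simpa [Function.comp] using this
    have houter : HasDerivAt (fun u : ℝ => u ^ (1/α)) (1/α * Q ^ (1/α - 1))
        (C + |c i0 + 0| ^ α) := by
      have he : C + |c i0 + 0| ^ α = Q := by rw [add_zero]; exact hQC.symm
      rw [he]
      have := Real.hasDerivAt_rpow_const (x := Q) (p := 1/α) (Or.inl hQ.ne')
      convert this using 1
    have := houter.comp 0 hcomp'
    simpa [Function.comp_def] using this
  have hFd : HasDerivAt F ((1/(2*(n:ℝ))) * ∑ k, 2 * (y k - v k) * (-(X k i0)) +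
      lam * (w j * ((1/α * Q ^ (1/α-1)) * (α * |c i0| ^ (α - 2) * c i0)))) 0 := by
    have := hA.add (((hg.const_mul (w j)).add_const K).const_mul lam)
    simpa [hF, Pi.add_def] using this
  have hmin : IsLocalMin F 0 := by
    have h0 : F 0 = L c := by
      rw [← hLF 0]
      congr 1
      rw [add_zero, Function.update_eq_self]
    refine Filter.Eventually.of_forall fun t => ?_
    rw [h0, ← hLF t]
    exact hc _
  have hzero := hmin.hasDerivAt_eq_zero hFd
  -- final algebra
  have hαne : α ≠ 0 := by linarith
  set T := ∑ k, X k i0 * (y k - v k) with hT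
  have hsum : ∑ k, 2 * (y k - v k) * (-(X k i0)) = -2 * T := by
    rw [hT, Finset.mul_sum]
    exact Finset.sum_congr rfl fun k _ => by ring
  rw [hsum] at hzero
  have hcoef : (1:ℝ)/(2*(n:ℝ)) * (-2 * T) = -(((n:ℝ))⁻¹ * T) := by
    rw [one_div, mul_inv]
    ring
  rw [hcoef] at hzero
  have hsimp : lam * (w j * ((1/α * Q ^ (1/α-1)) * (α * |c i0| ^ (α - 2) * c i0)))
      = lam * w j * (Q ^ (1/α-1) * (|c i0| ^ (α-2) * c i0)) := by
    field_simp
  rw [hsimp] at hzero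
  linarith


/-- if the matrix `Z` (columns `Z_j = X_{(j)}η(S_{(j)})`, `j ∈ Ê`)
has trivial null space, then the block Lasso solution is unique, vanishes off
`Ê`, satisfies `β̂_{(j)} = γ̂_j η(S_{(j)})` with `γ̂_Ê = (ZᵀZ)⁻¹Zᵀŷ`, and has at
most `min(n,J)` nonzero groups. -/
theorem blockLasso_unique_of_null_triv (n p J : ℕ) (y : Fin n → ℝ)
    (X : Matrix (Fin n) (Fin p) ℝ) (lam : ℝ) (hlam : 0 < lam)
    (w : Fin J → ℝ) (hw : ∀ j, 0 < w j)
    (G : Fin J → Finset (Fin p))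
    (hdisj : ∀ j k, j ≠ k → Disjoint (G j) (G k))
    (hcover : ∀ i, ∃ j, i ∈ G j)
    (wf : Fin p → ℝ) (hwf : ∀ j, ∀ i ∈ G j, wf i = w j)
    (α αs ρ : ℝ) (hα : 1 < α) (hconj : 1 / α + 1 / αs = 1) (hρ : ρ = αs / α)
    (L : (Fin p → ℝ) → ℝ)
    (hL : ∀ β, L β = (1 / (2 * n)) * ∑ k, (y k - X.mulVec β k) ^ 2 +
        lam * ∑ j, w j * (∑ i ∈ G j, |β i| ^ α) ^ (1 / α))
    (b : Fin p → ℝ) (hb : ∀ β, L b ≤ L β)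
    (yhat : Fin n → ℝ) (hyhat : yhat = X.mulVec b)
    (S : Fin p → ℝ)
    (hS : ∀ i, S i = (n * lam * wf i)⁻¹ * (X.transpose.mulVec (y - X.mulVec b)) i)
    (Ehat : Finset (Fin J))
    (hE : Ehat = Finset.univ.filter (fun j =>
        (∑ i ∈ G j, |(X.transpose.mulVec (y - X.mulVec b)) i| ^ αs) ^ (1 / αs)
          / (w j * n) = lam))
    (γ : Fin J → ℝ) (hγ : ∀ j, γ j = (∑ i ∈ G j, |b i| ^ α) ^ (1 / α))
    (Z : Matrix (Fin n) {j // j ∈ Ehat} ℝ)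
    (hZ : ∀ k (j : {j // j ∈ Ehat}),
        Z k j = ∑ i ∈ G j.1, X k i * (Real.sign (S i) * |S i| ^ ρ))
    (hnull : ∀ c : {j // j ∈ Ehat} → ℝ, Z.mulVec c = 0 → c = 0) :
    (∀ b' : Fin p → ℝ, (∀ β, L b' ≤ L β) → b' = b) ∧
    (∀ j ∉ Ehat, ∀ i ∈ G j, b i = 0) ∧
    (∀ j ∈ Ehat, ∀ i ∈ G j, b i = γ j * (Real.sign (S i) * |S i| ^ ρ)) ∧
    ((fun j : {j // j ∈ Ehat} => γ j.1) =
        ((Z.transpose * Z)⁻¹ * Z.transpose).mulVec yhat) ∧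
    (Finset.univ.filter (fun j => ∃ i ∈ G j, b i ≠ 0)).card ≤ min n J := by
  classical
  -- exponent arithmetic
  have hα0 : (0:ℝ) < α := by linarith
  have hαne : α ≠ 0 := ne_of_gt hα0
  have hα1ne : α - 1 ≠ 0 := by intro h; rw [sub_eq_zero] at h; exact absurd h.symm (ne_of_lt hα)
  have hαsne : αs ≠ 0 := by
    intro h
    rw [h, div_zero] at hconj
    have : α = 1 := by field_simp at hconj; linarith
    linarith
  have hαs_eq : αs = α / (α - 1) := by
    rw [eq_div_iff hα1ne]
    field_simp at hconj
    linear_combination (-1 : ℝ) * hconj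
  have hαs_pos : 0 < αs := by rw [hαs_eq]; exact div_pos hα0 (by linarith)
  have hprod : (α - 1) * αs = α := by rw [hαs_eq]; field_simp
  have hρ1 : (α - 1) * ρ = 1 := by rw [hρ, hαs_eq]; field_simp
  have hρ2 : (1/α - 1) * ρ = -(1/α) := by rw [hρ, hαs_eq]; field_simp; ring_nf
  have hexp0 : (1/α - 1) * αs + 1 = 0 := by rw [hαs_eq]; field_simp; ring
  -- transpose formula
  have hTr : ∀ (c : Fin p → ℝ) (i : Fin p),
      X.transpose.mulVec (y - X.mulVec c) i = ∑ k, X k i * (y k - X.mulVec c k) := by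
    intro c i
    simp [Matrix.mulVec, dotProduct, Matrix.transpose_apply]
  -- stationarity
  have key : ∀ c : Fin p → ℝ, (∀ β, L c ≤ L β) → ∀ j : Fin J, ∀ i0 ∈ G j,
      0 < (∑ i ∈ G j, |c i| ^ α) →
      (↑n)⁻¹ * (X.transpose.mulVec (y - X.mulVec c)) i0 =
        lam * w j * ((∑ i ∈ G j, |c i| ^ α) ^ (1/α - 1) * (|c i0| ^ (α-2) * c i0)) := by
    intro c hc j i0 hi0 hQ
    rw [hTr c i0]
    exact stationary y X lam w G hdisj α hα L hL c hc j i0 hi0 hQ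
  -- sum-zero helper
  have hQzero : ∀ (c : Fin p → ℝ) (j : Fin J), (∑ i ∈ G j, |c i| ^ α) = 0 →
      ∀ i ∈ G j, c i = 0 := by
    intro c j h i hi
    have h0 := (Finset.sum_eq_zero_iff_of_nonneg
      (fun i _ => Real.rpow_nonneg (abs_nonneg _) _)).mp h i hi
    have := (Real.rpow_eq_zero_iff_of_nonneg (abs_nonneg _)).mp h0
    exact abs_eq_zero.mp this.1
  have hQpos_of_ne : ∀ (c : Fin p → ℝ) (j : Fin J) (i : Fin p), i ∈ G j → c i ≠ 0 →
      0 < ∑ i' ∈ G j, |c i'| ^ α := by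
    intro c j i hi hci
    have hpos : 0 < |c i| ^ α := Real.rpow_pos_of_pos (abs_pos.mpr hci) _
    have hle : |c i| ^ α ≤ ∑ i' ∈ G j, |c i'| ^ α :=
      Finset.single_le_sum (fun i' _ => Real.rpow_nonneg (abs_nonneg _) _) hi
    linarith
  -- n = 0 forces minimizers to vanish
  have hzero_case : n = 0 → ∀ c : Fin p → ℝ, (∀ β, L c ≤ L β) → c = 0 := by
    intro hn c hc
    funext i
    rw [Pi.zero_apply]
    by_contra hci
    obtain ⟨j, hij⟩ := hcover i
    have hQ := hQpos_of_ne c j i hij hci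
    have hk := key c hc j i hij hQ
    have hninv : ((n:ℝ))⁻¹ = 0 := by rw [hn]; simp
    rw [hninv, zero_mul] at hk
    have h1 : 0 < (∑ i' ∈ G j, |c i'| ^ α) ^ (1/α - 1) := Real.rpow_pos_of_pos hQ _
    have h2 : |c i| ^ (α - 2) * c i ≠ 0 := by
      have : |c i| ^ (α - 2) ≠ 0 := ne_of_gt (Real.rpow_pos_of_pos (abs_pos.mpr hci) _)
      exact mul_ne_zero this hci
    exact (mul_ne_zero (mul_ne_zero (ne_of_gt hlam) (ne_of_gt (hw j)))
      (mul_ne_zero (ne_of_gt h1) h2)) hk.symm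
  -- positivity of group sum means n > 0 and gives the score formula
  have hnpos_of : ∀ (c : Fin p → ℝ), (∀ β, L c ≤ L β) →
      ∀ (j : Fin J), 0 < (∑ i ∈ G j, |c i| ^ α) → (0:ℝ) < n := by
    intro c hc j hQ
    rcases Nat.eq_zero_or_pos n with hn0 | hn
    · exfalso
      have hc0 := hzero_case hn0 c hc
      rw [hc0] at hQ
      simp [Real.zero_rpow hαne] at hQ
    · exact_mod_cast hn
  have hTc : ∀ (c : Fin p → ℝ), (∀ β, L c ≤ L β) → ∀ (j : Fin J), ∀ i ∈ G j,
      0 < (∑ i' ∈ G j, |c i'| ^ α) →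
      X.transpose.mulVec (y - X.mulVec c) i =
        (n : ℝ) * (lam * w j *
          ((∑ i' ∈ G j, |c i'| ^ α) ^ (1/α - 1) * (|c i| ^ (α-2) * c i))) := by
    intro c hc j i hi hQ
    have hn := hnpos_of c hc j hQ
    have hk := key c hc j i hi hQ
    rw [← hk]
    field_simp
  have hscore : ∀ (c : Fin p → ℝ), (∀ β, L c ≤ L β) → X.mulVec c = X.mulVec b →
      ∀ (j : Fin J), ∀ i ∈ G j, 0 < (∑ i' ∈ G j, |c i'| ^ α) →
      S i = (∑ i' ∈ G j, |c i'| ^ α) ^ (1/α - 1) * (|c i| ^ (α-2) * c i) := by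
    intro c hc hXc j i hi hQ
    have hn := hnpos_of c hc j hQ
    have hAne : ((n:ℝ) * lam * w j) ≠ 0 :=
      ne_of_gt (mul_pos (mul_pos hn hlam) (hw j))
    rw [hS i, hwf j i hi, ← hXc, hTc c hc j i hi hQ, inv_mul_eq_div, div_eq_iff hAne]
    ring
  -- nonzero groups are in the equicorrelation set
  have hEmem : ∀ (c : Fin p → ℝ), (∀ β, L c ≤ L β) → X.mulVec c = X.mulVec b →
      ∀ (j : Fin J), 0 < (∑ i ∈ G j, |c i| ^ α) → j ∈ Ehat := by
    intro c hc hXc j hQ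
    have hn := hnpos_of c hc j hQ
    rw [hE, Finset.mem_filter]
    refine ⟨Finset.mem_univ j, ?_⟩
    set Qc := ∑ i ∈ G j, |c i| ^ α with hQc
    have hA : (0:ℝ) < (n:ℝ) * lam * w j := mul_pos (mul_pos hn hlam) (hw j)
    have habs : ∀ i ∈ G j, |X.transpose.mulVec (y - X.mulVec b) i|
        = ((n:ℝ) * lam * w j) * (Qc ^ (1/α - 1) * |c i| ^ (α-1)) := by
      intro i hi
      rw [← hXc, hTc c hc j i hi hQ, abs_mul, abs_mul]
      rw [abs_of_pos hn, abs_of_pos (mul_pos hlam (hw j)), hp2 α Qc (c i) hα hQ]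
      ring
    have hsum : ∑ i ∈ G j, |X.transpose.mulVec (y - X.mulVec b) i| ^ αs
        = ((n:ℝ) * lam * w j) ^ αs := by
      have hterm : ∀ i ∈ G j, |X.transpose.mulVec (y - X.mulVec b) i| ^ αs
          = ((n:ℝ) * lam * w j) ^ αs * Qc ^ ((1/α - 1) * αs) * |c i| ^ α := by
        intro i hi
        rw [habs i hi,
          Real.mul_rpow hA.le (mul_nonneg (Real.rpow_nonneg hQ.le _)
            (Real.rpow_nonneg (abs_nonneg _) _)),
          Real.mul_rpow (Real.rpow_nonneg hQ.le _) (Real.rpow_nonneg (abs_nonneg _) _),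
          ← Real.rpow_mul hQ.le, ← Real.rpow_mul (abs_nonneg _), hprod]
        ring
      rw [Finset.sum_congr rfl hterm, ← Finset.mul_sum, ← hQc, mul_assoc]
      have : Qc ^ ((1/α - 1) * αs) * Qc = 1 := by
        nth_rewrite 2 [← Real.rpow_one Qc]
        rw [← Real.rpow_add hQ, hexp0, Real.rpow_zero]
      rw [this, mul_one]
    rw [hsum, ← Real.rpow_mul hA.le, mul_one_div_cancel hαsne, Real.rpow_one,
      div_eq_iff (ne_of_gt (mul_pos (hw j) hn))]
    ring
  -- part 2 (generalized)
  have part2' : ∀ (c : Fin p → ℝ), (∀ β, L c ≤ L β) → X.mulVec c = X.mulVec b →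
      ∀ j ∉ Ehat, ∀ i ∈ G j, c i = 0 := by
    intro c hc hXc j hj i hi
    by_contra hci
    exact hj (hEmem c hc hXc j (hQpos_of_ne c j i hi hci))
  -- part 3 (generalized)
  have part3' : ∀ (c : Fin p → ℝ), (∀ β, L c ≤ L β) → X.mulVec c = X.mulVec b →
      ∀ j ∈ Ehat, ∀ i ∈ G j,
      c i = (∑ i' ∈ G j, |c i'| ^ α) ^ (1/α) * (Real.sign (S i) * |S i| ^ ρ) := by
    intro c hc hXc j hj i hi
    rcases (Finset.sum_nonneg (fun i' _ => Real.rpow_nonneg (abs_nonneg _) _)).eq_or_lt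
      with hQ0 | hQpos
    · rw [hQzero c j hQ0.symm i hi, ← hQ0,
        Real.zero_rpow (one_div_ne_zero hαne), zero_mul]
    · rw [hscore c hc hXc j i hi hQpos]
      exact (hp3 α ρ _ (c i) hα hρ1 hρ2 hQpos).symm
  -- partition of coordinates
  have hpart : ∀ f : Fin p → ℝ, ∑ i, f i = ∑ j, ∑ i ∈ G j, f i := by
    intro f
    have huniv : Finset.univ.biUnion G = Finset.univ := by
      ext i
      simp only [Finset.mem_biUnion, Finset.mem_univ, iff_true, true_and]
      exact hcover i
    rw [← huniv, Finset.sum_biUnion]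
    intro j _ k _ hjk
    exact hdisj j k hjk
  -- fitted values through Z
  have hfit : ∀ (c : Fin p → ℝ), (∀ β, L c ≤ L β) → X.mulVec c = X.mulVec b →
      Z.mulVec (fun j : {j // j ∈ Ehat} => (∑ i ∈ G j.1, |c i| ^ α) ^ (1/α))
        = X.mulVec c := by
    intro c hc hXc
    funext k
    have hEsum : ∑ j, ∑ i ∈ G j, X k i * c i = ∑ j ∈ Ehat, ∑ i ∈ G j, X k i * c i := by
      symm
      apply Finset.sum_subset (Finset.subset_univ _)
      intro j _ hj
      exact Finset.sum_eq_zero fun i hi => by rw [part2' c hc hXc j hj i hi, mul_zero]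
    calc Z.mulVec (fun j : {j // j ∈ Ehat} => (∑ i ∈ G j.1, |c i| ^ α) ^ (1/α)) k
        = ∑ j : {j // j ∈ Ehat}, Z k j * (∑ i ∈ G j.1, |c i| ^ α) ^ (1/α) := by
          simp [Matrix.mulVec, dotProduct]
      _ = ∑ j : {j // j ∈ Ehat}, ∑ i ∈ G j.1, X k i * c i := by
          refine Finset.sum_congr rfl fun j _ => ?_
          rw [hZ k j, Finset.sum_mul]
          refine (Finset.sum_congr rfl fun i hi => ?_).symm
          rw [part3' c hc hXc j.1 j.2 i hi]
          ring
      _ = ∑ j ∈ Ehat, ∑ i ∈ G j, X k i * c i :=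
          Finset.sum_coe_sort Ehat (fun j => ∑ i ∈ G j, X k i * c i)
      _ = ∑ j, ∑ i ∈ G j, X k i * c i := hEsum.symm
      _ = ∑ i, X k i * c i := (hpart _).symm
      _ = X.mulVec c k := by simp [Matrix.mulVec, dotProduct]
  -- injectivity of Z
  have hZlin_inj : Function.Injective Z.mulVecLin := by
    intro u v huv
    have h0 : Z.mulVec (u - v) = 0 := by
      rw [Matrix.mulVec_sub]
      rw [show Z.mulVec u = Z.mulVec v from huv]
      simp
    exact sub_eq_zero.mp (hnull _ h0)
  -- invertibility of ZᵀZ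
  have hdet : IsUnit (Z.transpose * Z).det := by
    rw [← Matrix.isUnit_iff_isUnit_det, ← Matrix.mulVec_injective_iff_isUnit]
    intro u v huv
    have hker : Z.mulVec (u - v) = 0 := by
      have h1 : (Z.transpose * Z).mulVec (u - v) = 0 := by
        rw [Matrix.mulVec_sub, huv]
        simp
      have h2 : dotProduct (Z.mulVec (u - v)) (Z.mulVec (u - v)) = 0 := by
        rw [Matrix.dotProduct_mulVec, ← Matrix.mulVec_transpose,
          Matrix.mulVec_mulVec, h1]
        simp
      exact dotProduct_self_eq_zero.mp h2
    exact sub_eq_zero.mp (hnull _ hker)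
  -- part 4
  have hZγ : Z.mulVec (fun j : {j // j ∈ Ehat} => γ j.1) = yhat := by
    have : (fun j : {j // j ∈ Ehat} => γ j.1)
        = fun j : {j // j ∈ Ehat} => (∑ i ∈ G j.1, |b i| ^ α) ^ (1/α) := by
      funext j
      rw [hγ]
    rw [this, hyhat]
    exact hfit b hb rfl
  have part4 : (fun j : {j // j ∈ Ehat} => γ j.1)
      = ((Z.transpose * Z)⁻¹ * Z.transpose).mulVec yhat := by
    rw [← hZγ, Matrix.mulVec_mulVec, Matrix.mul_assoc, ← Matrix.mulVec_mulVec,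
      Matrix.mulVec_mulVec, Matrix.nonsing_inv_mul _ hdet, Matrix.one_mulVec]
  -- part 5 card bound
  have hcardE : Ehat.card ≤ n := by
    have hfin := LinearMap.finrank_le_finrank_of_injective hZlin_inj
    simpa [Module.finrank_fintype_fun_eq_card, Fintype.card_coe] using hfin
  have part5 : (Finset.univ.filter (fun j => ∃ i ∈ G j, b i ≠ 0)).card ≤ min n J := by
    have hsub : (Finset.univ.filter (fun j => ∃ i ∈ G j, b i ≠ 0)) ⊆ Ehat := by
      intro j hj
      rw [Finset.mem_filter] at hj
      obtain ⟨-, i, hi, hbi⟩ := hj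
      exact hEmem b hb rfl j (hQpos_of_ne b j i hi hbi)
    refine le_min ((Finset.card_le_card hsub).trans hcardE) ?_
    simpa using Finset.card_filter_le Finset.univ (fun j => ∃ i ∈ G j, b i ≠ 0)
  -- part 1 : uniqueness
  have part1 : ∀ b' : Fin p → ℝ, (∀ β, L b' ≤ L β) → b' = b := by
    intro b' hb'
    rcases Nat.eq_zero_or_pos n with hn0 | hn
    · rw [hzero_case hn0 b' hb', hzero_case hn0 b hb]
    · have hnR : (0:ℝ) < n := by exact_mod_cast hn
      set m : Fin p → ℝ := fun i => (b i + b' i)/2 with hm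
      have hmv : ∀ k, X.mulVec m k = (X.mulVec b k + X.mulVec b' k)/2 := by
        intro k
        simp only [Matrix.mulVec, dotProduct, hm]
        rw [eq_div_iff (two_ne_zero (α := ℝ)), Finset.sum_mul, ← Finset.sum_add_distrib]
        exact Finset.sum_congr rfl fun i _ => by ring
      have hquad : ∑ k, (y k - X.mulVec m k)^2 =
          (∑ k, (y k - X.mulVec b k)^2 + ∑ k, (y k - X.mulVec b' k)^2)/2
          - ∑ k, ((X.mulVec b k - X.mulVec b' k)/2)^2 := by
        rw [← Finset.sum_add_distrib, Finset.sum_div, ← Finset.sum_sub_distrib]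
        refine Finset.sum_congr rfl fun k _ => ?_
        rw [hmv k]
        ring
      have hpen : ∀ j : Fin J, (∑ i ∈ G j, |m i|^α)^(1/α) ≤
          ((∑ i ∈ G j, |b i|^α)^(1/α) + (∑ i ∈ G j, |b' i|^α)^(1/α))/2 := by
        intro j
        have hmk := Real.Lp_add_le (s := G j) (fun i => b i / 2) (fun i => b' i / 2) hα.le
        have hmeq : ∑ i ∈ G j, |m i|^α = ∑ i ∈ G j, |b i / 2 + b' i / 2|^α :=
          Finset.sum_congr rfl fun i _ => by rw [hm]; ring_nf
        have hhalf : ∀ f : Fin p → ℝ, (∑ i ∈ G j, |f i / 2|^α)^(1/α)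
            = (∑ i ∈ G j, |f i|^α)^(1/α)/2 := by
          intro f
          have h1 : ∀ i ∈ G j, |f i / 2|^α = |f i|^α / 2^α := by
            intro i _
            rw [abs_div, abs_two, Real.div_rpow (abs_nonneg _) (by norm_num)]
          rw [Finset.sum_congr rfl h1, ← Finset.sum_div,
            Real.div_rpow (Finset.sum_nonneg fun i _ => Real.rpow_nonneg (abs_nonneg _) _)
              (Real.rpow_nonneg (by norm_num) _),
            ← Real.rpow_mul (by norm_num : (0:ℝ) ≤ 2), mul_one_div_cancel hαne,
            Real.rpow_one]
        rw [hmeq]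
        calc (∑ i ∈ G j, |b i/2 + b' i/2|^α)^(1/α)
            ≤ (∑ i ∈ G j, |b i/2|^α)^(1/α) + (∑ i ∈ G j, |b' i/2|^α)^(1/α) := hmk
          _ = ((∑ i ∈ G j, |b i|^α)^(1/α) + (∑ i ∈ G j, |b' i|^α)^(1/α))/2 := by
              rw [hhalf b, hhalf b']
              ring
      have hLb'b : L b' = L b := le_antisymm (hb' b) (hb b')
      have hLm : L m ≤ (L b + L b')/2
          - (1/(2*(n:ℝ))) * ∑ k, ((X.mulVec b k - X.mulVec b' k)/2)^2 := by
        rw [hL m, hL b, hL b', hquad]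
        have hpen_sum : ∑ j, w j * (∑ i ∈ G j, |m i|^α)^(1/α) ≤
            ∑ j, w j * (((∑ i ∈ G j, |b i|^α)^(1/α) + (∑ i ∈ G j, |b' i|^α)^(1/α))/2) :=
          Finset.sum_le_sum fun j _ => mul_le_mul_of_nonneg_left (hpen j) (hw j).le
        have hsplit : ∑ j, w j * (((∑ i ∈ G j, |b i|^α)^(1/α) + (∑ i ∈ G j, |b' i|^α)^(1/α))/2)
            = (∑ j, w j * (∑ i ∈ G j, |b i|^α)^(1/α)
              + ∑ j, w j * (∑ i ∈ G j, |b' i|^α)^(1/α))/2 := by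
          rw [← Finset.sum_add_distrib, Finset.sum_div]
          exact Finset.sum_congr rfl fun j _ => by ring
        rw [hsplit] at hpen_sum
        have h3 := mul_le_mul_of_nonneg_left hpen_sum hlam.le
        linarith [h3]
      have hgap0 : ∑ k, ((X.mulVec b k - X.mulVec b' k)/2)^2 = 0 := by
        have h2n : (0:ℝ) < 1/(2*(n:ℝ)) := by positivity
        have hnn : 0 ≤ ∑ k, ((X.mulVec b k - X.mulVec b' k)/2)^2 :=
          Finset.sum_nonneg fun k _ => sq_nonneg _
        have hLmb : L b ≤ L m := hb m
        nlinarith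
      have hXeq : X.mulVec b' = X.mulVec b := by
        funext k
        have hk := (Finset.sum_eq_zero_iff_of_nonneg
          (fun k _ => sq_nonneg _)).mp hgap0 k (Finset.mem_univ k)
        have h0 := pow_eq_zero_iff (by norm_num : (2:ℕ) ≠ 0) |>.mp hk
        linarith [h0]
      have hγeq : (fun j : {j // j ∈ Ehat} => (∑ i ∈ G j.1, |b' i|^α)^(1/α))
          = (fun j : {j // j ∈ Ehat} => (∑ i ∈ G j.1, |b i|^α)^(1/α)) := by
        apply hZlin_inj
        show Z.mulVec _ = Z.mulVec _
        rw [hfit b' hb' hXeq, hfit b hb rfl, hXeq]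
      funext i
      obtain ⟨j, hij⟩ := hcover i
      by_cases hj : j ∈ Ehat
      · rw [part3' b' hb' hXeq j hj i hij, part3' b hb rfl j hj i hij,
          show (∑ i' ∈ G j, |b' i'|^α)^(1/α) = (∑ i' ∈ G j, |b i'|^α)^(1/α)
            from congrFun hγeq ⟨j, hj⟩]
      · rw [part2' b' hb' hXeq j hj i hij, part2' b hb rfl j hj i hij]
  exact ⟨part1, fun j hj i hi => part2' b hb rfl j hj i hi,
    fun j hj i hi => by rw [hγ j]; exact part3' b hb rfl j hj i hi, part4, part5⟩
end

section
/- (Simple example, probability of active set {1}) Let n = 2, p = 3, groups G_1 = {1,2}, G_2 = {3}, α = 2, X/√2 = [[1,0,1],[0,1,1]], β_0 = 0, ε ~ N_2(0, σ²I_2), W = I_3, λ > 0. Then the probability that the group Lasso solution has exactly group 1 active equals (1/2)·exp(−λ²/σ²). -/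
open Real MeasureTheory Set Filter

lemma aux_quad (a c d : ℝ) (h : ∀ t : ℝ, 0 ≤ a*t^2 + c*t + d*|t|) : |c| ≤ d := by
  by_contra hcd
  push_neg at hcd
  set δ := (|c| - d)/(|a|+1) with hδdef
  have ha : (0:ℝ) < |a| + 1 := by positivity
  have hδ : 0 < δ := by apply div_pos <;> linarith
  have hδa : δ * (|a|+1) = |c| - d := div_mul_cancel₀ _ (ne_of_gt ha)
  have hle : a * δ ≤ |a| * δ := by nlinarith [le_abs_self a]
  rcases le_or_gt 0 c with hc | hc
  · have h1 := h (-δ)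
    rw [abs_neg, abs_of_pos hδ] at h1
    have hca : |c| = c := abs_of_nonneg hc
    nlinarith [mul_pos hδ hδ]
  · have h1 := h δ
    rw [abs_of_pos hδ] at h1
    have hca : |c| = -c := abs_of_neg hc
    nlinarith [mul_pos hδ hδ]

lemma aux_lin (a c : ℝ) (h : ∀ t : ℝ, |t| < 1 → 0 ≤ a*t^2 + c*t) : c = 0 := by
  have key : |c| ≤ 0 := by
    by_contra hcd
    push_neg at hcd
    set δ := min (|c|/(|a|+1)) (1/2) with hδdef
    have ha : (0:ℝ) < |a| + 1 := by positivity
    have hδ : 0 < δ := lt_min (by positivity) (by norm_num)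
    have hδ1 : |δ| < 1 := by
      rw [abs_of_pos hδ]; exact lt_of_le_of_lt (min_le_right _ _) (by norm_num)
    have hδa : δ * (|a|+1) ≤ |c| := by
      have := min_le_left (|c|/(|a|+1)) (1/2)
      calc δ * (|a|+1) ≤ |c|/(|a|+1) * (|a|+1) := by nlinarith
        _ = |c| := div_mul_cancel₀ _ (ne_of_gt ha)
    have hle : a * δ ≤ |a| * δ := by nlinarith [le_abs_self a]
    rcases le_or_gt 0 c with hc | hc
    · have h1 := h (-δ) (by rwa [abs_neg])
      have hca : |c| = c := abs_of_nonneg hc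
      nlinarith [mul_pos hδ hδ]
    · have h1 := h δ hδ1
      have hca : |c| = -c := abs_of_neg hc
      nlinarith [mul_pos hδ hδ]
  have := abs_nonneg c
  have : |c| = 0 := le_antisymm key this
  exact abs_eq_zero.1 this

lemma coordq (t lam n e u : ℝ) (ht : t^2 = 2) :
    (1/4)*(e - t*(t*e/2 - lam*e/n))^2 + (lam/n)*(e*(t*e/2 - lam*e/n))
      + (1/2)*(u - (t*e/2 - lam*e/n))^2
    = (1/4)*(e - t*u)^2 + (lam/n)*(e*u) := by
  linear_combination (-(u^2 - (t*e/2 - lam*e/n)^2)/4) * ht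

lemma core (lam e0 e1 s2 n s b2a β0 β1 β2 : ℝ) (hlam : 0 < lam)
    (hs2 : s2^2 = 2) (hn2 : n^2 = e0^2 + e1^2) (hnpos : 0 < n)
    (h2 : e0*e1 ≤ 0) (hsq : s^2 = β0^2 + β1^2) (hsnn : 0 ≤ s)
    (hb2a : b2a = |β2|) :
    (1/4)*((e0 - s2*((s2*e0/2 - lam*e0/n)+0))^2 + (e1 - s2*((s2*e1/2 - lam*e1/n)+0))^2)
      + lam*((s2/2 - lam/n)*n + 0)
    ≤ (1/4)*((e0 - s2*(β0+β2))^2 + (e1 - s2*(β1+β2))^2) + lam*(s + b2a) := by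
  simp only [add_zero]
  have hn0 : n ≠ 0 := hnpos.ne'
  have key1 : e0*β0 + e1*β1 ≤ n * s := by
    nlinarith [sq_nonneg (e0*β1 - e1*β0), mul_nonneg hnpos.le hsnn,
      sq_nonneg (n*s + (e0*β0+e1*β1))]
  have hb2nn : 0 ≤ b2a := hb2a ▸ abs_nonneg β2
  have key2 : (e0+e1)*β2 ≤ n * b2a := by
    have hsum : (e0+e1)^2 ≤ n^2 := by nlinarith
    have habs : |e0+e1| ≤ n := by rw [abs_le]; constructor <;> nlinarith
    calc (e0+e1)*β2 ≤ |(e0+e1)*β2| := le_abs_self _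
      _ = |e0+e1| * b2a := by rw [abs_mul, hb2a]
      _ ≤ n * b2a := mul_le_mul_of_nonneg_right habs hb2nn
  have hpen : (lam/n)*(e0*(β0+β2) + e1*(β1+β2)) ≤ lam*(s + b2a) := by
    have h3 : (lam/n)*(e0*β0+e1*β1) ≤ (lam/n)*(n*s) :=
      mul_le_mul_of_nonneg_left key1 (by positivity)
    have h4 : (lam/n)*((e0+e1)*β2) ≤ (lam/n)*(n*b2a) :=
      mul_le_mul_of_nonneg_left key2 (by positivity)
    have h5 : (lam/n)*(n*s) = lam * s := by field_simp
    have h6 : (lam/n)*(n*b2a) = lam * b2a := by field_simp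
    nlinarith
  have hval : (lam/n)*(e0*(s2*e0/2 - lam*e0/n)) + (lam/n)*(e1*(s2*e1/2 - lam*e1/n))
      = lam*((s2/2 - lam/n)*n) := by
    have hinv : n * n⁻¹ = 1 := mul_inv_cancel₀ hn0
    linear_combination (-(lam/n)*(s2/2-lam/n)) * hn2 + (lam*(s2/2-lam/n)*n) * hinv
  have c0 := coordq s2 lam n e0 (β0+β2) hs2
  have c1 := coordq s2 lam n e1 (β1+β2) hs2
  linarith [c0, c1, hpen, hval, sq_nonneg ((β0+β2) - (s2*e0/2 - lam*e0/n)),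
    sq_nonneg ((β1+β2) - (s2*e1/2 - lam*e1/n))]

lemma forward (lam : ℝ) (hlam : 0 < lam) (e0 e1 b0 b1 : ℝ)
    (hb : b0 ≠ 0 ∨ b1 ≠ 0)
    (hmin : ∀ β0 β1 β2 : ℝ,
      (1/4)*((e0 - Real.sqrt 2*(b0+0))^2 + (e1 - Real.sqrt 2*(b1+0))^2)
        + lam*(Real.sqrt (b0^2+b1^2) + |(0:ℝ)|)
      ≤ (1/4)*((e0 - Real.sqrt 2*(β0+β2))^2 + (e1 - Real.sqrt 2*(β1+β2))^2)
        + lam*(Real.sqrt (β0^2+β1^2) + |β2|)) :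
    2*lam^2 < e0^2 + e1^2 ∧ e0*e1 ≤ 0 := by
  have hs2' : (Real.sqrt 2)^2 = 2 := Real.sq_sqrt (by norm_num)
  have hs2pos' : 0 < Real.sqrt 2 := Real.sqrt_pos.2 (by norm_num)
  obtain ⟨s2, hs2def⟩ : ∃ s2, s2 = Real.sqrt 2 := ⟨_, rfl⟩
  rw [← hs2def] at hs2' hs2pos' hmin
  have hs2 := hs2'; have hs2pos := hs2pos'
  have hbb : 0 < b0^2 + b1^2 := by
    rcases hb with h | h
    · positivity
    · positivity
  obtain ⟨B, hBdef⟩ : ∃ B, B = Real.sqrt (b0^2+b1^2) := ⟨_, rfl⟩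
  have hB2 : B^2 = b0^2 + b1^2 := by rw [hBdef]; exact Real.sq_sqrt hbb.le
  have hBpos : 0 < B := by rw [hBdef]; exact Real.sqrt_pos.2 hbb
  obtain ⟨r0, hr0def⟩ : ∃ r, r = e0 - s2*b0 := ⟨_, rfl⟩
  obtain ⟨r1, hr1def⟩ : ∃ r, r = e1 - s2*b1 := ⟨_, rfl⟩
  -- (i)
  have keyi : |(-(s2/2)*(r0+r1))| ≤ lam := by
    apply aux_quad 1
    intro t
    have h := hmin b0 b1 t
    rw [← hBdef] at h
    have hid : 1*t^2 + (-(s2/2)*(r0+r1))*t + lam*|t|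
        = ((1/4)*((e0 - s2*(b0+t))^2 + (e1 - s2*(b1+t))^2) + lam*(B + |t|))
          - ((1/4)*((e0 - s2*(b0+0))^2 + (e1 - s2*(b1+0))^2) + lam*(B + |(0:ℝ)|)) := by
      rw [abs_zero]
      linear_combination (-(s2*t/2)) * hr0def + (-(s2*t/2)) * hr1def + (-(t^2/2)) * hs2
    rw [hid]
    linarith
  have hsumsq : (r0+r1)^2 ≤ 2*lam^2 := by
    have h1 : (-(s2/2)*(r0+r1))^2 ≤ lam^2 := by
      nlinarith [keyi, abs_nonneg (-(s2/2)*(r0+r1)), sq_abs (-(s2/2)*(r0+r1))]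
    have heq : (-(s2/2)*(r0+r1))^2 = (r0+r1)^2/2 := by
      linear_combination ((r0+r1)^2/4) * hs2
    rw [heq] at h1
    linarith
  -- (ii)
  have keyii : -(s2/2)*(r0*b0+r1*b1) + lam*B = 0 := by
    apply aux_lin ((b0^2+b1^2)/2)
    intro t ht
    have h := hmin ((1+t)*b0) ((1+t)*b1) 0
    rw [← hBdef] at h
    have hpen : Real.sqrt (((1+t)*b0)^2 + ((1+t)*b1)^2) = (1+t) * B := by
      have e1' : ((1+t)*b0)^2 + ((1+t)*b1)^2 = (1+t)^2 * (b0^2+b1^2) := by ring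
      rw [e1', Real.sqrt_mul (sq_nonneg _), Real.sqrt_sq_eq_abs, ← hBdef,
        abs_of_pos (by cases' abs_lt.1 ht with h1 h2; linarith)]
    rw [hpen] at h
    have hid : ((b0^2+b1^2)/2)*t^2 + (-(s2/2)*(r0*b0+r1*b1) + lam*B)*t
        = ((1/4)*((e0 - s2*((1+t)*b0+0))^2 + (e1 - s2*((1+t)*b1+0))^2) + lam*((1+t)*B + |(0:ℝ)|))
          - ((1/4)*((e0 - s2*(b0+0))^2 + (e1 - s2*(b1+0))^2) + lam*(B + |(0:ℝ)|)) := by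
      rw [abs_zero]
      linear_combination (-(s2*t*b0/2)) * hr0def + (-(s2*t*b1/2)) * hr1def
        + (-(t^2/4)*(b0^2+b1^2)) * hs2
    rw [hid]
    linarith
  -- (iii)
  have keyiii : (s2/2)*(r0*b1 - r1*b0) = 0 := by
    apply aux_lin ((b0^2+b1^2)/2 + lam*B/2)
    intro t ht
    have h := hmin (b0 - t*b1) (b1 + t*b0) 0
    rw [← hBdef] at h
    have hpen : Real.sqrt ((b0-t*b1)^2 + (b1+t*b0)^2) ≤ (1 + t^2/2) * B := by
      have e1' : (b0-t*b1)^2 + (b1+t*b0)^2 = (1+t^2) * (b0^2+b1^2) := by ring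
      rw [e1', Real.sqrt_mul (by positivity), ← hBdef]
      have h2' : Real.sqrt (1+t^2) ≤ 1 + t^2/2 := by
        rw [show (1:ℝ)+t^2/2 = Real.sqrt ((1+t^2/2)^2) from (Real.sqrt_sq (by positivity)).symm]
        apply Real.sqrt_le_sqrt; nlinarith [sq_nonneg t]
      exact mul_le_mul_of_nonneg_right h2' hBpos.le
    have h' : (1/4)*((e0 - s2*(b0+0))^2 + (e1 - s2*(b1+0))^2) + lam*(B + |(0:ℝ)|)
        ≤ (1/4)*((e0 - s2*((b0-t*b1)+0))^2 + (e1 - s2*((b1+t*b0)+0))^2)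
          + lam*((1 + t^2/2) * B + |(0:ℝ)|) := by
      refine le_trans h ?_
      have := mul_le_mul_of_nonneg_left hpen hlam.le
      linarith
    have hid : ((b0^2+b1^2)/2 + lam*B/2)*t^2 + ((s2/2)*(r0*b1 - r1*b0))*t
        = ((1/4)*((e0 - s2*((b0-t*b1)+0))^2 + (e1 - s2*((b1+t*b0)+0))^2)
            + lam*((1 + t^2/2) * B + |(0:ℝ)|))
          - ((1/4)*((e0 - s2*(b0+0))^2 + (e1 - s2*(b1+0))^2) + lam*(B + |(0:ℝ)|)) := by
      rw [abs_zero]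
      linear_combination ((s2*t*b1/2)) * hr0def + (-(s2*t*b0/2)) * hr1def
        + (-(t^2/4)*(b0^2+b1^2)) * hs2
    rw [hid]
    linarith
  -- consequences
  clear hmin hs2def hBdef hs2' hs2pos'
  have hrb : r0*b0 + r1*b1 = s2*lam*B := by
    have hlin : s2*(r0*b0+r1*b1) = 2*(lam*B) := by linear_combination (-2 : ℝ) * keyii
    linear_combination (s2/2) * hlin - ((r0*b0+r1*b1)/2) * hs2
  have hcross : r0*b1 - r1*b0 = 0 := by
    rcases mul_eq_zero.1 keyiii with h | h
    · exfalso; linarith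
    · exact h
  have hr0B : r0*B = s2*lam*b0 := by
    have h2 : r0*B*B = s2*lam*b0*B := by
      linear_combination b0 * hrb + b1 * hcross + r0 * hB2
    exact mul_right_cancel₀ hBpos.ne' h2
  have hr1B : r1*B = s2*lam*b1 := by
    have h2 : r1*B*B = s2*lam*b1*B := by
      linear_combination b1 * hrb - b0 * hcross + r1 * hB2
    exact mul_right_cancel₀ hBpos.ne' h2
  have he0B : e0*B = s2*(B+lam)*b0 := by linear_combination hr0B - B * hr0def
  have he1B : e1*B = s2*(B+lam)*b1 := by linear_combination hr1B - B * hr1def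
  have hb01 : b0*b1 ≤ 0 := by
    have h1 : (r0+r1)*B = s2*lam*(b0+b1) := by linear_combination hr0B + hr1B
    have h2 : (r0+r1)^2*B^2 = 2*lam^2*(b0+b1)^2 := by
      linear_combination ((r0+r1)*B + s2*lam*(b0+b1)) * h1 + (lam^2*(b0+b1)^2) * hs2
    have h3' : (r0+r1)^2*B^2 ≤ 2*lam^2*B^2 := mul_le_mul_of_nonneg_right hsumsq (sq_nonneg B)
    have h3 : 2*lam^2*(b0+b1)^2 ≤ 2*lam^2*B^2 := by linarith
    have h4 : (b0+b1)^2 ≤ B^2 := (mul_le_mul_iff_right₀ (by positivity : (0:ℝ) < 2*lam^2)).1 h3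
    linarith [h4, hB2]
  constructor
  · have hsq : (e0^2+e1^2)*B^2 = 2*(B+lam)^2*B^2 := by
      have h0 : e0^2*B^2 = 2*(B+lam)^2*b0^2 := by
        linear_combination (e0*B + s2*(B+lam)*b0) * he0B + ((B+lam)^2*b0^2) * hs2
      have h1 : e1^2*B^2 = 2*(B+lam)^2*b1^2 := by
        linear_combination (e1*B + s2*(B+lam)*b1) * he1B + ((B+lam)^2*b1^2) * hs2
      linear_combination h0 + h1 + (-2*(B+lam)^2) * hB2
    have hfin : e0^2+e1^2 = 2*(B+lam)^2 := by
      have hB2pos : (0:ℝ) < B^2 := by positivity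
      exact mul_right_cancel₀ hB2pos.ne' hsq
    rw [hfin]
    linarith [mul_pos hBpos hlam, mul_pos hBpos hBpos]
  · have h0 : e0*e1*B^2 = 2*(B+lam)^2*(b0*b1) := by
      linear_combination (e1*B) * he0B + (s2*(B+lam)*b0) * he1B + ((B+lam)^2*b0*b1) * hs2
    have h5 : (0:ℝ) ≤ 2*(B+lam)^2 := by positivity
    have h6 : 2*(B+lam)^2*(b0*b1) ≤ 0 := mul_nonpos_of_nonneg_of_nonpos h5 hb01
    have h7 : e0*e1*B^2 ≤ 0 := by linarith
    by_contra hcon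
    push_neg at hcon
    have h8 := mul_pos hcon (pow_pos hBpos 2)
    linarith


lemma backward (lam : ℝ) (hlam : 0 < lam) (e0 e1 : ℝ)
    (h1 : 2*lam^2 < e0^2 + e1^2) (h2 : e0*e1 ≤ 0) :
    ∃ b0 b1 : ℝ, (b0 ≠ 0 ∨ b1 ≠ 0) ∧
    ∀ β0 β1 β2 : ℝ,
      (1/4)*((e0 - Real.sqrt 2*(b0+0))^2 + (e1 - Real.sqrt 2*(b1+0))^2)
        + lam*(Real.sqrt (b0^2+b1^2) + |(0:ℝ)|)
      ≤ (1/4)*((e0 - Real.sqrt 2*(β0+β2))^2 + (e1 - Real.sqrt 2*(β1+β2))^2)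
        + lam*(Real.sqrt (β0^2+β1^2) + |β2|) := by
  have hs2' : (Real.sqrt 2)^2 = 2 := Real.sq_sqrt (by norm_num)
  have hs2pos' : 0 < Real.sqrt 2 := Real.sqrt_pos.2 (by norm_num)
  obtain ⟨s2, hs2def⟩ : ∃ x, x = Real.sqrt 2 := ⟨_, rfl⟩
  rw [← hs2def]
  rw [← hs2def] at hs2' hs2pos'
  obtain ⟨n, hndef⟩ : ∃ x, x = Real.sqrt (e0^2 + e1^2) := ⟨_, rfl⟩
  have hn2 : n^2 = e0^2 + e1^2 := by rw [hndef]; exact Real.sq_sqrt (by positivity)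
  have hnpos : 0 < n := by
    rw [hndef]; exact Real.sqrt_pos.2 (by nlinarith)
  have hnlam : s2 * lam < n := by nlinarith
  have hcpos : 0 < s2/2 - lam/n := by
    rw [sub_pos, div_lt_div_iff₀ hnpos (by norm_num : (0:ℝ) < 2)]
    nlinarith
  refine ⟨s2*e0/2 - lam*e0/n, s2*e1/2 - lam*e1/n, ?_, ?_⟩
  · have he : e0 ≠ 0 ∨ e1 ≠ 0 := by
      by_contra hcon; push_neg at hcon; rcases hcon with ⟨a, b⟩
      rw [a, b] at h1; nlinarith
    rcases he with h | h
    · exact Or.inl (by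
        have : s2*e0/2 - lam*e0/n = (s2/2 - lam/n) * e0 := by ring
        rw [this]; exact mul_ne_zero hcpos.ne' h)
    · exact Or.inr (by
        have : s2*e1/2 - lam*e1/n = (s2/2 - lam/n) * e1 := by ring
        rw [this]; exact mul_ne_zero hcpos.ne' h)
  · intro β0 β1 β2
    have hsqb : Real.sqrt ((s2*e0/2 - lam*e0/n)^2 + (s2*e1/2 - lam*e1/n)^2)
        = (s2/2 - lam/n) * n := by
      have hin : (s2*e0/2 - lam*e0/n)^2 + (s2*e1/2 - lam*e1/n)^2 = ((s2/2 - lam/n)*n)^2 := by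
        have : (s2*e0/2 - lam*e0/n)^2 + (s2*e1/2 - lam*e1/n)^2
            = (s2/2 - lam/n)^2 * (e0^2 + e1^2) := by ring
        rw [this, ← hn2]; ring
      rw [hin, Real.sqrt_sq (by positivity)]
    rw [hsqb, abs_zero]
    exact core lam e0 e1 s2 n (Real.sqrt (β0^2+β1^2)) (|β2|) β0 β1 β2 hlam hs2' hn2 hnpos h2
      (Real.sq_sqrt (by positivity)) (Real.sqrt_nonneg _) rfl


lemma angular_set :
    {θ : ℝ | Real.sin θ * Real.cos θ ≤ 0} ∩ Ioo (-π) π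
      = Icc (-π/2) 0 ∪ Ico (π/2) π := by
  have hpi := Real.pi_pos
  ext θ
  simp only [mem_inter_iff, mem_setOf_eq, mem_Ioo, mem_union, mem_Icc, mem_Ico]
  constructor
  · rintro ⟨hle, hl, hr⟩
    rcases lt_or_ge θ (-π/2) with h1 | h1
    · exfalso
      have hs : Real.sin θ < 0 := by
        have : Real.sin (-θ) > 0 := Real.sin_pos_of_pos_of_lt_pi (by linarith) (by linarith)
        rw [Real.sin_neg] at this; linarith
      have hc : Real.cos θ < 0 := by
        have : Real.cos (-θ) < 0 := Real.cos_neg_of_pi_div_two_lt_of_lt (by linarith) (by linarith)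
        rw [Real.cos_neg] at this; linarith
      nlinarith
    · rcases le_or_gt θ 0 with h2 | h2
      · exact Or.inl ⟨h1, h2⟩
      · rcases lt_or_ge θ (π/2) with h3 | h3
        · exfalso
          have hs : Real.sin θ > 0 := Real.sin_pos_of_pos_of_lt_pi h2 (by linarith)
          have hc : Real.cos θ > 0 := Real.cos_pos_of_mem_Ioo ⟨by linarith, h3⟩
          nlinarith
        · exact Or.inr ⟨h3, hr⟩
  · rintro (⟨h1, h2⟩ | ⟨h1, h2⟩)
    · refine ⟨?_, by linarith, by linarith⟩
      exact mul_nonpos_iff.2 (Or.inr ⟨Real.sin_nonpos_of_nonpos_of_neg_pi_le h2 (by linarith),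
        Real.cos_nonneg_of_mem_Icc ⟨by linarith, by linarith⟩⟩)
    · refine ⟨?_, by linarith, h2⟩
      exact mul_nonpos_iff.2 (Or.inl ⟨Real.sin_nonneg_of_nonneg_of_le_pi (by linarith) (by linarith),
        Real.cos_nonpos_of_pi_div_two_le_of_le h1 (by linarith)⟩)

lemma angular_measure :
    (volume ({θ : ℝ | Real.sin θ * Real.cos θ ≤ 0} ∩ Ioo (-π) π)).toReal = π := by
  have hpi := Real.pi_pos
  rw [angular_set]
  rw [measure_union (by
      apply Set.disjoint_left.2
      rintro θ ⟨_, h2⟩ ⟨h3, _⟩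
      linarith) measurableSet_Ico]
  rw [Real.volume_Icc, Real.volume_Ico]
  rw [ENNReal.toReal_add (by finiteness) (by finiteness)]
  rw [ENNReal.toReal_ofReal (by linarith), ENNReal.toReal_ofReal (by linarith)]
  ring

lemma radial (σ2 lam : ℝ) (hσ : 0 < σ2) (hlam : 0 < lam) :
    ∫ r in Ioi (Real.sqrt 2 * lam), r * ((2*π*σ2)⁻¹ * Real.exp (-r^2/(2*σ2)))
      = (2*π)⁻¹ * Real.exp (-lam^2/σ2) := by
  have hpi := Real.pi_pos
  set c : ℝ := (2*π*σ2)⁻¹ with hc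
  have hcpos : 0 < c := by positivity
  have hderiv : ∀ x ∈ Ioi (Real.sqrt 2 * lam),
      HasDerivAt (fun r => -(σ2*c) * Real.exp (-r^2/(2*σ2)))
        (x * (c * Real.exp (-x^2/(2*σ2)))) x := by
    intro x _
    have h1 : HasDerivAt (fun r : ℝ => -r^2/(2*σ2)) (-x/σ2) x := by
      have := (hasDerivAt_pow 2 x).neg.div_const (2*σ2)
      refine this.congr_deriv ?_
      field_simp
      ring
    have h3 := (h1.exp).const_mul (-(σ2*c))
    refine h3.congr_deriv ?_
    field_simp
  have hpos : ∀ x ∈ Ioi (Real.sqrt 2 * lam), 0 ≤ x * (c * Real.exp (-x^2/(2*σ2))) := by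
    intro x hx
    have hx0 : 0 < x := lt_of_le_of_lt (by positivity) hx
    positivity
  have htend : Tendsto (fun r => -(σ2*c) * Real.exp (-r^2/(2*σ2))) atTop (nhds 0) := by
    rw [show (0:ℝ) = -(σ2*c) * 0 by ring]
    apply Tendsto.const_mul
    apply Real.tendsto_exp_atBot.comp
    have h1 : Tendsto (fun r : ℝ => r^2) atTop atTop := tendsto_pow_atTop (by norm_num)
    have h2 := h1.atTop_div_const (by positivity : (0:ℝ) < 2*σ2)
    have h3 := tendsto_neg_atTop_atBot.comp h2
    refine h3.congr fun r => ?_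
    simp [neg_div]
  have hcont : ContinuousWithinAt (fun r => -(σ2*c) * Real.exp (-r^2/(2*σ2)))
      (Ici (Real.sqrt 2 * lam)) (Real.sqrt 2 * lam) := by
    apply Continuous.continuousWithinAt
    continuity
  have := integral_Ioi_of_hasDerivAt_of_nonneg hcont hderiv hpos htend
  rw [this]
  have hsq : (Real.sqrt 2 * lam)^2 = 2*lam^2 := by
    rw [mul_pow, Real.sq_sqrt (by norm_num : (0:ℝ) ≤ 2)]
  rw [hsq]
  have hexp : -(2*lam^2)/(2*σ2) = -lam^2/σ2 := by field_simp
  rw [hexp, hc]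
  field_simp
  ring


lemma plane_integral (σ2 lam : ℝ) (hσ : 0 < σ2) (hlam : 0 < lam) :
    ∫ p : ℝ×ℝ, Set.indicator {q : ℝ×ℝ | 2*lam^2 < q.1^2+q.2^2 ∧ q.1*q.2 ≤ 0}
        (fun q => (2*π*σ2)⁻¹ * Real.exp (-(q.1^2+q.2^2)/(2*σ2))) p
      = (1/2) * Real.exp (-lam^2/σ2) := by
  have hpi := Real.pi_pos
  rw [← integral_comp_polarCoord_symm]
  have hcong : ∀ p ∈ polarCoord.target,
      p.1 • Set.indicator {q : ℝ×ℝ | 2*lam^2 < q.1^2+q.2^2 ∧ q.1*q.2 ≤ 0}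
        (fun q => (2*π*σ2)⁻¹ * Real.exp (-(q.1^2+q.2^2)/(2*σ2))) (polarCoord.symm p)
      = (Set.indicator (Ioi (Real.sqrt 2 * lam))
          (fun r => r * ((2*π*σ2)⁻¹ * Real.exp (-r^2/(2*σ2)))) p.1)
        * (Set.indicator {θ : ℝ | Real.sin θ * Real.cos θ ≤ 0} (fun _ => (1:ℝ)) p.2) := by
    rintro ⟨r, θ⟩ ⟨hr, hθ⟩
    simp only [polarCoord_symm_apply] at *
    have hr0 : 0 < r := hr
    have htrig : (r * Real.cos θ)^2 + (r * Real.sin θ)^2 = r^2 := by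
      have := Real.sin_sq_add_cos_sq θ
      nlinarith [this]
    have hmemiff : (2*lam^2 < (r * Real.cos θ)^2 + (r * Real.sin θ)^2
        ∧ (r * Real.cos θ) * (r * Real.sin θ) ≤ 0)
        ↔ (Real.sqrt 2 * lam < r ∧ Real.sin θ * Real.cos θ ≤ 0) := by
      rw [htrig]
      constructor
      · rintro ⟨h1, h2⟩
        constructor
        · have h2l : (Real.sqrt 2 * lam)^2 = 2*lam^2 := by
            rw [mul_pow, Real.sq_sqrt (by norm_num : (0:ℝ) ≤ 2)]
          nlinarith [Real.sqrt_nonneg 2, mul_nonneg (Real.sqrt_nonneg 2) hlam.le]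
        · nlinarith [mul_pos hr0 hr0]
      · rintro ⟨h1, h2⟩
        have hsl : 0 < Real.sqrt 2 * lam := by positivity
        constructor
        · have h2l : (Real.sqrt 2 * lam)^2 = 2*lam^2 := by
            rw [mul_pow, Real.sq_sqrt (by norm_num : (0:ℝ) ≤ 2)]
          nlinarith
        · nlinarith [mul_pos hr0 hr0]
    by_cases hmem : Real.sqrt 2 * lam < r ∧ Real.sin θ * Real.cos θ ≤ 0
    · rw [Set.indicator_of_mem (show _ ∈ {q : ℝ×ℝ | 2*lam^2 < q.1^2+q.2^2 ∧ q.1*q.2 ≤ 0} from hmemiff.2 hmem),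
        Set.indicator_of_mem (show r ∈ Ioi (Real.sqrt 2 * lam) from hmem.1),
        Set.indicator_of_mem (show θ ∈ {θ : ℝ | Real.sin θ * Real.cos θ ≤ 0} from hmem.2)]
      have : (r * Real.cos θ)^2 + (r * Real.sin θ)^2 = r^2 := htrig
      rw [this]
      simp only [smul_eq_mul, mul_one]
    · rw [Set.indicator_of_notMem (by
        intro hcon
        exact hmem (hmemiff.1 hcon))]
      rw [not_and_or] at hmem
      rcases hmem with h | h
      · rw [Set.indicator_of_notMem (show r ∉ Ioi (Real.sqrt 2 * lam) from h)]
        simp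
      · rw [Set.indicator_of_notMem (show θ ∉ {θ : ℝ | Real.sin θ * Real.cos θ ≤ 0} from h)]
        simp
  rw [setIntegral_congr_fun polarCoord.open_target.measurableSet hcong]
  rw [polarCoord_target, Measure.volume_eq_prod, setIntegral_prod_mul]
  have hA : MeasurableSet {θ : ℝ | Real.sin θ * Real.cos θ ≤ 0} :=
    measurableSet_le (by fun_prop) measurable_const
  rw [setIntegral_indicator measurableSet_Ioi]
  rw [integral_indicator_const (1:ℝ) hA, measureReal_def, Measure.restrict_apply hA]
  have hI : Ioi (0:ℝ) ∩ Ioi (Real.sqrt 2 * lam) = Ioi (Real.sqrt 2 * lam) := by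
    rw [Set.Ioi_inter_Ioi, sup_eq_right.2 (by positivity : (0:ℝ) ≤ Real.sqrt 2 * lam)]
  rw [hI, radial σ2 lam hσ hlam]
  rw [angular_measure]
  rw [smul_eq_mul, mul_one]
  field_simp


lemma euclid_transport (σ2 lam : ℝ) (hσ : 0 < σ2) (hlam : 0 < lam) :
    (volume.withDensity (fun e : EuclideanSpace ℝ (Fin 2) => ENNReal.ofReal
        ((2 * π * σ2)⁻¹ * Real.exp (-‖e‖ ^ 2 / (2 * σ2)))))
      {e : EuclideanSpace ℝ (Fin 2) | 2*lam^2 < (e 0)^2 + (e 1)^2 ∧ (e 0) * (e 1) ≤ 0}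
    = ENNReal.ofReal (∫ p : ℝ×ℝ, Set.indicator {q : ℝ×ℝ | 2*lam^2 < q.1^2+q.2^2 ∧ q.1*q.2 ≤ 0}
        (fun q => (2*π*σ2)⁻¹ * Real.exp (-(q.1^2+q.2^2)/(2*σ2))) p) := by
  have hpi := Real.pi_pos
  set S' : Set (ℝ×ℝ) := {q : ℝ×ℝ | 2*lam^2 < q.1^2+q.2^2 ∧ q.1*q.2 ≤ 0} with hS'def
  have hS'm : MeasurableSet S' := by
    have h1 : MeasurableSet {q : ℝ×ℝ | 2*lam^2 < q.1^2+q.2^2} :=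
      measurableSet_lt measurable_const
        ((measurable_fst.pow_const 2).add (measurable_snd.pow_const 2))
    have h2 : MeasurableSet {q : ℝ×ℝ | q.1*q.2 ≤ 0} :=
      measurableSet_le (measurable_fst.mul measurable_snd) measurable_const
    exact h1.inter h2
  set T : EuclideanSpace ℝ (Fin 2) ≃ᵐ ℝ×ℝ :=
    (MeasurableEquiv.toLp 2 (Fin 2 → ℝ)).symm.trans (MeasurableEquiv.finTwoArrow) with hTdef
  have hTapp : ∀ e : EuclideanSpace ℝ (Fin 2), T e = (e 0, e 1) := fun e => rfl
  have hSpre : {e : EuclideanSpace ℝ (Fin 2) | 2*lam^2 < (e 0)^2 + (e 1)^2 ∧ (e 0) * (e 1) ≤ 0}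
      = T ⁻¹' S' := by
    ext e
    simp only [Set.mem_preimage, hTapp, hS'def, Set.mem_setOf_eq]
  have hSm : MeasurableSet
      {e : EuclideanSpace ℝ (Fin 2) | 2*lam^2 < (e 0)^2 + (e 1)^2 ∧ (e 0) * (e 1) ≤ 0} := by
    rw [hSpre]; exact T.measurable hS'm
  have hnorm : ∀ e : EuclideanSpace ℝ (Fin 2), ‖e‖^2 = (e 0)^2 + (e 1)^2 := by
    intro e
    rw [EuclideanSpace.norm_eq, Real.sq_sqrt (by positivity)]
    simp [Fin.sum_univ_two, sq_abs]
  rw [withDensity_apply _ hSm, ← lintegral_indicator hSm]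
  have hmp : MeasurePreserving (⇑T) volume volume := by
    rw [hTdef, MeasurableEquiv.coe_trans]
    exact (volume_preserving_finTwoArrow ℝ).comp
      (EuclideanSpace.volume_preserving_symm_measurableEquiv_toLp (Fin 2))
  have step1 : ∫⁻ e, Set.indicator
        {e : EuclideanSpace ℝ (Fin 2) | 2*lam^2 < (e 0)^2 + (e 1)^2 ∧ (e 0) * (e 1) ≤ 0}
        (fun e => ENNReal.ofReal ((2 * π * σ2)⁻¹ * Real.exp (-‖e‖ ^ 2 / (2 * σ2)))) e
      = ∫⁻ e, Set.indicator S'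
        (fun q => ENNReal.ofReal ((2*π*σ2)⁻¹ * Real.exp (-(q.1^2+q.2^2)/(2*σ2)))) (T e) := by
    apply lintegral_congr
    intro e
    rw [hSpre]
    by_cases hm : T e ∈ S'
    · rw [Set.indicator_of_mem (Set.mem_preimage.2 hm), Set.indicator_of_mem hm, hTapp, hnorm e]
    · rw [Set.indicator_of_notMem (fun hc => hm (Set.mem_preimage.1 hc)),
        Set.indicator_of_notMem hm]
  rw [step1, hmp.lintegral_comp_emb T.measurableEmbedding]
  have step2 : ∫⁻ p, Set.indicator S'
        (fun q => ENNReal.ofReal ((2*π*σ2)⁻¹ * Real.exp (-(q.1^2+q.2^2)/(2*σ2)))) p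
      = ∫⁻ p, ENNReal.ofReal (Set.indicator S'
        (fun q => (2*π*σ2)⁻¹ * Real.exp (-(q.1^2+q.2^2)/(2*σ2))) p) := by
    apply lintegral_congr
    intro p
    by_cases hm : p ∈ S'
    · rw [Set.indicator_of_mem hm, Set.indicator_of_mem hm]
    · rw [Set.indicator_of_notMem hm, Set.indicator_of_notMem hm, ENNReal.ofReal_zero]
  rw [step2]
  have hg : Integrable (fun p : ℝ×ℝ => (2*π*σ2)⁻¹ * Real.exp (-(p.1^2+p.2^2)/(2*σ2))) := by
    have h1 : Integrable (fun x : ℝ => Real.exp (-(1/(2*σ2)) * x^2)) :=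
      integrable_exp_neg_mul_sq (by positivity)
    have heq : (fun p : ℝ×ℝ => (2*π*σ2)⁻¹ * Real.exp (-(p.1^2+p.2^2)/(2*σ2)))
        = fun p : ℝ×ℝ => (2*π*σ2)⁻¹
          * (Real.exp (-(1/(2*σ2)) * p.1^2) * Real.exp (-(1/(2*σ2)) * p.2^2)) := by
      funext p
      rw [← Real.exp_add]
      congr 1
      field_simp
      ring
    rw [heq, Measure.volume_eq_prod]
    exact (h1.mul_prod h1).const_mul _
  have hint : Integrable (Set.indicator S'
      (fun q => (2*π*σ2)⁻¹ * Real.exp (-(q.1^2+q.2^2)/(2*σ2)))) := hg.indicator hS'm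
  have hnn : 0 ≤ᵐ[volume] (Set.indicator S'
      (fun q => (2*π*σ2)⁻¹ * Real.exp (-(q.1^2+q.2^2)/(2*σ2)))) :=
    ae_of_all _ (fun p => Set.indicator_nonneg (fun q _ => by positivity) p)
  rw [← ofReal_integral_eq_lintegral_ofReal hint hnn]



/-- in the simple example (`n = 2`, `p = 3`, groups `{1,2}`,`{3}`,
`α = 2`, `X/√2 = [[1,0,1],[0,1,1]]`, `β₀ = 0`, `ε ~ N₂(0,σ²I₂)`, `W = I`), the
probability that the group Lasso solution has exactly group 1 active equals
`(1/2)·exp(-λ²/σ²)`. -/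
theorem groupLasso_example_prob_A1 (σ2 lam : ℝ) (hσ : 0 < σ2) (hlam : 0 < lam)
    (μ : Measure (EuclideanSpace ℝ (Fin 2)))
    (hμ : μ = volume.withDensity (fun e => ENNReal.ofReal
        ((2 * π * σ2)⁻¹ * Real.exp (-‖e‖ ^ 2 / (2 * σ2)))))
    (X : Matrix (Fin 2) (Fin 3) ℝ)
    (hX : X = Real.sqrt 2 • Matrix.of ![![1, 0, 1], ![0, 1, 1]])
    (L : (Fin 2 → ℝ) → (Fin 3 → ℝ) → ℝ)
    (hL : ∀ e β, L e β = (1 / 4) * ∑ k, (e k - X.mulVec β k) ^ 2 +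
        lam * (Real.sqrt ((β 0) ^ 2 + (β 1) ^ 2) + |β 2|)) :
    μ {e | ∃ b : Fin 3 → ℝ, (∀ β, L e b ≤ L e β) ∧
        (b 0 ≠ 0 ∨ b 1 ≠ 0) ∧ b 2 = 0}
      = ENNReal.ofReal ((1 / 2) * Real.exp (-lam ^ 2 / σ2)) := by
  have hL' : ∀ (e : Fin 2 → ℝ) (β : Fin 3 → ℝ), L e β =
      (1/4) * ((e 0 - Real.sqrt 2 * (β 0 + β 2))^2 + (e 1 - Real.sqrt 2 * (β 1 + β 2))^2)
      + lam * (Real.sqrt ((β 0)^2 + (β 1)^2) + |β 2|) := by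
    intro e β
    rw [hL, hX]
    simp [Matrix.mulVec, dotProduct, Fin.sum_univ_three, Fin.sum_univ_two,
      Matrix.smul_apply]
    ring
  have hset : {e : EuclideanSpace ℝ (Fin 2) | ∃ b : Fin 3 → ℝ, (∀ β, L e b ≤ L e β) ∧
        (b 0 ≠ 0 ∨ b 1 ≠ 0) ∧ b 2 = 0}
      = {e : EuclideanSpace ℝ (Fin 2) |
          2*lam^2 < (e 0)^2 + (e 1)^2 ∧ (e 0) * (e 1) ≤ 0} := by
    ext e
    simp only [Set.mem_setOf_eq]
    constructor
    · rintro ⟨b, hmin, hb01, hb2⟩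
      apply forward lam hlam (e 0) (e 1) (b 0) (b 1) hb01
      intro β0 β1 β2
      have h := hmin ![β0, β1, β2]
      rw [hL', hL'] at h
      simp only [Matrix.cons_val_zero, Matrix.cons_val_one, Matrix.head_cons,
        Matrix.cons_val_two, Matrix.tail_cons, hb2] at h
      convert h using 3 <;> ring
    · rintro ⟨h1, h2⟩
      obtain ⟨b0, b1, hb, hmin⟩ := backward lam hlam (e 0) (e 1) h1 h2
      refine ⟨![b0, b1, 0], fun β => ?_, ?_, rfl⟩
      · rw [hL', hL']
        have h := hmin (β 0) (β 1) (β 2)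
        simp only [Matrix.cons_val_zero, Matrix.cons_val_one, Matrix.head_cons,
          Matrix.cons_val_two, Matrix.tail_cons]
        convert h using 3 <;> ring
      · simpa using hb
  rw [hset, hμ, euclid_transport σ2 lam hσ hlam]
  congr 1
  exact plane_integral σ2 lam hσ hlam
end

section
/- Let α ∈ (1,∞) and let S ∈ ℝ^p satisfy the constraints ‖s_{(j)}‖_{α*} = 1 for all j in a set A with |A| ≤ n, together with Q^T s = 0 for a matrix Q ∈ ℝ^{p×(p−n)} of rank p−n whose columns are orthogonal to all vectors η(s) with ⟨η(s_{(j)}), s_{(j)}⟩ = 1 for j ∈ A. Then the constraints Q^T ds = 0 and ⟨η(s_{(j)}), ds_{(j)}⟩ = 0 (j ∈ A) are p − n + |A| linearly independent linear constraints on ds, so the solution set is a linear subspace of dimension n − |A|. -/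
open Real

open Matrix in
/-- Dot product distributes over finite sums in the first argument. -/
lemma aux_sum_dot {ι m : Type*} [Fintype ι] [Fintype m] (f : ι → m → ℝ) (w : m → ℝ) :
    dotProduct (∑ k, f k) w = ∑ k, dotProduct (f k) w := by
  simp only [dotProduct, Finset.sum_apply, Finset.sum_mul]
  exact Finset.sum_comm

open Matrix in
/-- A matrix of full column rank has linearly independent columns. -/
lemma aux_cols_li {n p : ℕ} (Q : Matrix (Fin p) (Fin (p - n)) ℝ) (hrank : Q.rank = p - n) :
    LinearIndependent ℝ (fun k : Fin (p - n) => (fun i => Q i k)) := by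
  have h1 := LinearMap.finrank_range_add_finrank_ker Q.mulVecLin
  rw [show Module.finrank ℝ (LinearMap.range Q.mulVecLin) = Q.rank from rfl, hrank,
    Module.finrank_fin_fun] at h1
  have hker0 : Module.finrank ℝ (LinearMap.ker Q.mulVecLin) = 0 := by omega
  have hker : LinearMap.ker Q.mulVecLin = ⊥ := Submodule.finrank_eq_zero.mp hker0
  have hinj : Function.Injective Q.mulVec := by
    have := LinearMap.ker_eq_bot.mp hker
    exact this
  have hli := Matrix.mulVec_injective_iff.mp hinj
  have heq : (fun k : Fin (p - n) => (fun i => Q i k)) = fun k => Qᵀ k := by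
    funext k i; simp [Matrix.transpose_apply]
  rw [heq]; exact hli

/-- the constraints `Qᵀds = 0` and `⟨η(s_{(j)}), ds_{(j)}⟩ = 0`
(`j ∈ A`) are `p - n + |A|` linearly independent linear constraints on `ds`, so
their solution set is a linear subspace of dimension `n - |A|`. -/
theorem tangent_space_dimension (n p J : ℕ) (hnp : n ≤ p)
    (G : Fin J → Finset (Fin p))
    (hdisj : ∀ j k, j ≠ k → Disjoint (G j) (G k))
    (A : Finset (Fin J)) (hA : A.card ≤ n)
    (α αs ρ : ℝ) (hα : 1 < α) (hconj : 1 / α + 1 / αs = 1) (hρ : ρ = αs / α)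
    (s : Fin p → ℝ)
    (Q : Matrix (Fin p) (Fin (p - n)) ℝ) (hrank : Q.rank = p - n)
    (hQs : Q.transpose.mulVec s = 0)
    (u : Fin J → Fin p → ℝ)
    (hu : ∀ j i, u j i = if i ∈ G j then Real.sign (s i) * |s i| ^ ρ else 0)
    (hsphere : ∀ j ∈ A, ∑ i ∈ G j, (Real.sign (s i) * |s i| ^ ρ) * s i = 1)
    (hQu : ∀ j ∈ A, Q.transpose.mulVec (u j) = 0) :
    LinearIndependent ℝ
        (Sum.elim (fun k : Fin (p - n) => (fun i => Q i k))
          (fun j : {j // j ∈ A} => u j.1)) ∧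
    Module.finrank ℝ
        ↥(LinearMap.ker (Matrix.mulVecLin Q.transpose) ⊓
          ⨅ j ∈ A, LinearMap.ker
            (∑ i ∈ G j, (Real.sign (s i) * |s i| ^ ρ) •
              (LinearMap.proj i : (Fin p → ℝ) →ₗ[ℝ] ℝ)))
      = n - A.card := by
  classical
  set v : Fin (p - n) ⊕ {j // j ∈ A} → Fin p → ℝ :=
    Sum.elim (fun k : Fin (p - n) => (fun i => Q i k))
      (fun j : {j // j ∈ A} => u j.1) with hv
  -- u j is nonzero for j ∈ A
  have hune : ∀ j ∈ A, u j ≠ 0 := by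
    intro j hj h0
    have hs1 := hsphere j hj
    have heq : ∑ i ∈ G j, (Real.sign (s i) * |s i| ^ ρ) * s i = ∑ i ∈ G j, u j i * s i :=
      Finset.sum_congr rfl fun i hi => by rw [hu j i, if_pos hi]
    rw [heq, h0] at hs1
    simp at hs1
  -- disjoint supports give orthogonality
  have hortho : ∀ j k : Fin J, j ≠ k → dotProduct (u j) (u k) = 0 := by
    intro j k hjk
    apply Finset.sum_eq_zero
    intro i _
    by_cases hij : i ∈ G j
    · have hik : i ∉ G k := Finset.disjoint_left.mp (hdisj j k hjk) hij
      rw [hu k i, if_neg hik, mul_zero]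
    · rw [hu j i, if_neg hij, zero_mul]
  -- columns of Q are orthogonal to u j for j ∈ A
  have hinlzero : ∀ j ∈ A, ∀ k : Fin (p - n),
      dotProduct (fun i => Q i k) (u j) = 0 := by
    intro j hj k
    have h := congrFun (hQu j hj) k
    simpa [Matrix.mulVec, dotProduct, Matrix.transpose_apply] using h
  -- linear independence of the full family
  have hLI : LinearIndependent ℝ v := by
    rw [Fintype.linearIndependent_iff]
    intro g hg
    -- first: the inr coefficients vanish
    have hginr : ∀ j0 : {j // j ∈ A}, g (Sum.inr j0) = 0 := by
      intro j0
      have hdot : dotProduct (∑ k, g k • v k) (u j0.1) = 0 := by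
        rw [hg]; exact zero_dotProduct _
      rw [aux_sum_dot] at hdot
      have hterm : ∀ k : Fin (p - n) ⊕ {j // j ∈ A},
          dotProduct (g k • v k) (u j0.1)
          = if k = Sum.inr j0 then g k * dotProduct (u j0.1) (u j0.1) else 0 := by
        intro k
        rw [smul_dotProduct]
        match k with
        | Sum.inl q =>
          rw [if_neg (by simp)]
          show g _ • dotProduct (fun i => Q i q) (u j0.1) = 0
          rw [hinlzero j0.1 j0.2 q, smul_zero]
        | Sum.inr j =>
          by_cases hjj : j = j0
          · subst hjj
            rw [if_pos rfl]
            rfl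
          · rw [if_neg (by simpa using hjj)]
            show g _ • dotProduct (u j.1) (u j0.1) = 0
            rw [hortho j.1 j0.1 (fun h => hjj (Subtype.ext h)), smul_zero]
      rw [Finset.sum_congr rfl (fun k _ => hterm k), Finset.sum_ite_eq' Finset.univ
        (Sum.inr j0 : Fin (p - n) ⊕ {j // j ∈ A})
        (fun k => g k * dotProduct (u j0.1) (u j0.1)),
        if_pos (Finset.mem_univ _)] at hdot
      have hne : dotProduct (u j0.1) (u j0.1) ≠ 0 := fun h =>
        hune j0.1 j0.2 (dotProduct_self_eq_zero.mp h)
      exact (mul_eq_zero.mp hdot).resolve_right hne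
    -- then: the inl coefficients vanish by linear independence of columns
    have hgsum : ∑ k : Fin (p - n), g (Sum.inl k) • (fun i => Q i k) = 0 := by
      have hg' := hg
      rw [Fintype.sum_sum_type] at hg'
      have h2 : ∑ j : {j // j ∈ A}, g (Sum.inr j) • v (Sum.inr j) = 0 := by
        apply Finset.sum_eq_zero
        intro j _
        rw [hginr j, zero_smul]
      rw [h2, add_zero] at hg'
      exact hg'
    have hcols := aux_cols_li (n := n) Q hrank
    have hginl := Fintype.linearIndependent_iff.mp hcols (fun k => g (Sum.inl k)) hgsum
    intro k
    cases k with
    | inl k => exact hginl k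
    | inr j => exact hginr j
  refine ⟨hLI, ?_⟩
  -- the matrix whose rows are the constraint vectors
  set M : Matrix (Fin (p - n) ⊕ {j // j ∈ A}) (Fin p) ℝ := Matrix.of v with hM
  -- kernel of M equals the subspace in question
  have hker : LinearMap.ker M.mulVecLin
      = (LinearMap.ker (Matrix.mulVecLin Q.transpose) ⊓
        ⨅ j ∈ A, LinearMap.ker
          (∑ i ∈ G j, (Real.sign (s i) * |s i| ^ ρ) •
            (LinearMap.proj i : (Fin p → ℝ) →ₗ[ℝ] ℝ))) := by
    ext x
    simp only [LinearMap.mem_ker, Submodule.mem_inf, Submodule.mem_iInf,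
      Matrix.mulVecLin_apply]
    have hMx : M.mulVec x = 0 ↔
        (∀ k : Fin (p - n), dotProduct (fun i => Q i k) x = 0) ∧
        (∀ j : {j // j ∈ A}, dotProduct (u j.1) x = 0) := by
      rw [funext_iff]
      constructor
      · intro h
        exact ⟨fun k => h (Sum.inl k), fun j => h (Sum.inr j)⟩
      · rintro ⟨h1, h2⟩ k
        cases k with
        | inl k => exact h1 k
        | inr j => exact h2 j
    rw [hMx]
    have hQform : (∀ k : Fin (p - n), dotProduct (fun i => Q i k) x = 0)
        ↔ Q.transpose.mulVec x = 0 := by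
      rw [funext_iff]
      apply forall_congr'
      intro k
      simp [Matrix.mulVec, dotProduct, Matrix.transpose_apply]
    have hfform : ∀ j : Fin J, dotProduct (u j) x
        = (∑ i ∈ G j, (Real.sign (s i) * |s i| ^ ρ) •
            (LinearMap.proj i : (Fin p → ℝ) →ₗ[ℝ] ℝ)) x := by
      intro j
      rw [LinearMap.sum_apply]
      simp only [LinearMap.smul_apply, LinearMap.proj_apply, smul_eq_mul]
      unfold dotProduct
      have hterm : ∀ i, u j i * x i
          = if i ∈ G j then (Real.sign (s i) * |s i| ^ ρ) * x i else 0 := by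
        intro i
        rw [hu j i]
        by_cases hij : i ∈ G j <;> simp [hij]
      rw [Finset.sum_congr rfl (fun i _ => hterm i), Finset.sum_ite_mem, Finset.univ_inter]
    rw [hQform]
    constructor
    · rintro ⟨h1, h2⟩
      refine ⟨h1, fun j hj => ?_⟩
      rw [← hfform j]
      exact h2 ⟨j, hj⟩
    · rintro ⟨h1, h2⟩
      refine ⟨h1, fun j => ?_⟩
      rw [hfform j.1]
      exact h2 j.1 j.2
  rw [← hker]
  -- rank-nullity for M
  have hrn := LinearMap.finrank_range_add_finrank_ker M.mulVecLin
  rw [Module.finrank_fin_fun] at hrn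
  have hrankM : Module.finrank ℝ (LinearMap.range M.mulVecLin)
      = (p - n) + A.card := by
    rw [show Module.finrank ℝ (LinearMap.range M.mulVecLin) = M.rank from rfl]
    rw [← Matrix.transpose_transpose M, Matrix.rank_transpose]
    rw [show M.transpose.rank
        = Module.finrank ℝ (LinearMap.range M.transpose.mulVecLin) from rfl]
    rw [Matrix.range_mulVecLin]
    have hrange : Set.range M.transpose.col = Set.range v := rfl
    rw [hrange, finrank_span_eq_card hLI]
    simp [Fintype.card_sum, Fintype.card_coe]
  rw [hrankM] at hrn
  omega
end
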